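/- (Weak subadditivity of the Cantor function) Let G_{n,M,A}(x) := |C_n(M,A)|^{-1} · |C_n(M,A) ∩ [0,x]| for x > 0 (and 0 for x ≤ 0) be the Cantor function of the n-iterate Cantor set based in [0,1], and let Ā := {0,1,...,|A|−1} be the canonical alphabet of the same cardinality. Then for any x ≤ y, G_{n,M,A}(y) − G_{n,M,A}(x) ≤ G_{n,M,Ā}(y − x). -/

import Mathlib

open MeasureTheory
open scoped ENNReal

/-- The discrete Cantor set `C_n^(d)(M, A) = { Σ_{j<n} a_j M^j : a_j ∈ A }`. -/
def discreteCantor (M : ℕ) (A : Finset ℕ) (n : ℕ) : Set ℕ :=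
  {k | ∃ a : Fin n → ℕ, (∀ j, a j ∈ A) ∧ k = ∑ j, a j * M ^ (j : ℕ)}

/-- The continuous `n`-iterate Cantor set based in `[0, L]`. -/
noncomputable def cantorIter (L : ℝ) (M : ℕ) (A : Finset ℕ) (n : ℕ) : Set ℝ :=
  ⋃ c ∈ discreteCantor M A n,
    Set.Icc (L / (M : ℝ) ^ n * (c : ℝ)) (L / (M : ℝ) ^ n * ((c : ℝ) + 1))

/-- The Cantor function `G_{n,M,A}(x) = |C_n(M,A)|⁻¹ · |C_n(M,A) ∩ [0,x]|` of the `n`-iterate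
Cantor set based in `[0,1]` (equal to `0` for `x ≤ 0`, since then `[0,x] ∩ C_n` is null). -/
noncomputable def cantorFun (M : ℕ) (A : Finset ℕ) (n : ℕ) (x : ℝ) : ℝ :=
  (volume (cantorIter 1 M A n ∩ Set.Icc 0 x)).toReal / ((A.card : ℝ) / (M : ℝ)) ^ n

namespace CantorAux

def canon (A : Finset ℕ) : Finset ℕ := Finset.range A.card
def dSet (M : ℕ) : List (Finset ℕ) → Finset ℕ
  | [] => {0}
  | A :: L => A.biUnion fun a => (dSet M L).image fun s => a + M * s
def cnt (S : Finset ℕ) (k e : ℕ) : ℕ := (S.filter fun c => k ≤ c ∧ c < e).card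
def cdiv (M x : ℕ) : ℕ := (x + (M - 1)) / M
variable {M : ℕ}
lemma cdiv_le_iff (hM : 0 < M) {t s : ℕ} : cdiv M t ≤ s ↔ t ≤ M * s := by
  unfold cdiv
  rw [Nat.div_le_iff_le_mul_add_pred hM]
  exact Nat.add_le_add_iff_right
lemma lt_cdiv_iff (hM : 0 < M) {t s : ℕ} : s < cdiv M t ↔ M * s < t := by
  rw [← not_le, cdiv_le_iff hM, not_le]
lemma cdiv_mono (hM : 0 < M) {t t' : ℕ} (h : t ≤ t') : cdiv M t ≤ cdiv M t' :=
  (cdiv_le_iff hM).2 (h.trans ((cdiv_le_iff hM).1 le_rfl))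
lemma cdiv_zero (hM : 0 < M) : cdiv M 0 = 0 :=
  Nat.div_eq_of_lt (by omega)
lemma le_M_mul_cdiv (hM : 0 < M) (t : ℕ) : t ≤ M * cdiv M t :=
  (cdiv_le_iff hM).1 le_rfl
lemma M_mul_cdiv_le (hM : 0 < M) (t : ℕ) : M * cdiv M t ≤ t + (M - 1) := by
  unfold cdiv; rw [mul_comm]; exact Nat.div_mul_le_self _ _

-- new part

lemma diff_le (hM : 0 < M) (k m a : ℕ) :
    cdiv M (k + m - a) ≤ cdiv M (k - a) + (m / M + 1) := by
  rw [cdiv_le_iff hM, Nat.mul_add, Nat.mul_add, Nat.mul_one]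
  have h1 : k - a ≤ M * cdiv M (k - a) := le_M_mul_cdiv hM _
  have h2 : M * (m / M) + m % M = m := Nat.div_add_mod m M
  have h3 : m % M < M := Nat.mod_lt _ hM
  generalize M * cdiv M (k - a) = X at h1 ⊢
  generalize M * (m / M) = Q at h2 ⊢
  omega

lemma diff_ge (hM : 0 < M) (k m : ℕ) {a : ℕ} (ha : a < M) :
    m / M ≤ cdiv M (k + m - a) - cdiv M (k - a) := by
  rcases Nat.eq_zero_or_pos (m / M) with hq | hq
  · simp [hq]
  obtain ⟨q', hq'⟩ : ∃ q', m / M = q' + 1 := ⟨m / M - 1, by omega⟩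
  have h2 : M * (m / M) + m % M = m := Nat.div_add_mod m M
  rw [hq'] at h2 ⊢
  rw [Nat.mul_add, Nat.mul_one] at h2
  have h3 : m % M < M := Nat.mod_lt _ hM
  rcases le_or_gt a k with hak | hak
  · have key : cdiv M (k - a) + q' < cdiv M (k + m - a) := by
      rw [lt_cdiv_iff hM, Nat.mul_add]
      have h1 : M * cdiv M (k - a) ≤ (k - a) + (M - 1) := M_mul_cdiv_le hM _
      generalize M * cdiv M (k - a) = X at h1 ⊢
      generalize M * q' = Y at h2 ⊢
      omega
    omega
  · have hka : k - a = 0 := by omega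
    have key : q' < cdiv M (k + m - a) := by
      rw [lt_cdiv_iff hM]
      generalize M * q' = Y at h2 ⊢
      omega
    rw [hka, cdiv_zero hM]
    omega

lemma cdiv_m_sub (hM : 0 < M) (m : ℕ) {a : ℕ} (ha : a < M) :
    cdiv M (m - a) = if a < m % M then m / M + 1 else m / M := by
  have h2 : M * (m / M) + m % M = m := Nat.div_add_mod m M
  have h3 : m % M < M := Nat.mod_lt _ hM
  split_ifs with h
  · refine le_antisymm ?_ ?_
    · rw [cdiv_le_iff hM, Nat.mul_add, Nat.mul_one]
      generalize M * (m / M) = Q at h2 ⊢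
      omega
    · have : m / M < cdiv M (m - a) := by
        rw [lt_cdiv_iff hM]
        generalize M * (m / M) = Q at h2 ⊢
        omega
      omega
  · refine le_antisymm ?_ ?_
    · rw [cdiv_le_iff hM]
      generalize M * (m / M) = Q at h2 ⊢
      omega
    · rcases Nat.eq_zero_or_pos (m / M) with hq | hq
      · omega
      obtain ⟨q', hq'⟩ : ∃ q', m / M = q' + 1 := ⟨m / M - 1, by omega⟩
      rw [hq'] at h2 ⊢
      rw [Nat.mul_add, Nat.mul_one] at h2
      have : q' < cdiv M (m - a) := by
        rw [lt_cdiv_iff hM]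
        generalize M * q' = Y at h2 ⊢
        omega
      omega

lemma sum_cdiv (hM : 0 < M) (x : ℕ) :
    ∑ a ∈ Finset.range M, cdiv M (x - a) = x := by
  have step1 : ∀ a ∈ Finset.range M, cdiv M (x - a) = (x + (M - 1 - a)) / M := by
    intro a ha
    rw [Finset.mem_range] at ha
    unfold cdiv
    rcases le_or_gt a x with h | h
    · congr 1; omega
    · rw [Nat.div_eq_of_lt (by omega), Nat.div_eq_of_lt (by omega)]
  rw [Finset.sum_congr rfl step1]
  have step2 : ∑ a ∈ Finset.range M, (x + (M - 1 - a)) / M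
      = ∑ b ∈ Finset.range M, (x + b) / M := by
    exact Finset.sum_range_reflect (fun b => (x + b) / M) M
  rw [step2]
  have step3 : ∀ b ∈ Finset.range M, (x + b) / M = x / M + (x % M + b) / M := by
    intro b _
    conv_lhs => rw [← Nat.div_add_mod x M]
    rw [Nat.add_assoc, Nat.mul_add_div hM]
  rw [Finset.sum_congr rfl step3, Finset.sum_add_distrib, Finset.sum_const,
    Finset.card_range, smul_eq_mul]
  have step4 : ∀ b ∈ Finset.range M, (x % M + b) / M = if M ≤ x % M + b then 1 else 0 := by
    intro b hb
    rw [Finset.mem_range] at hb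
    have hxm : x % M < M := Nat.mod_lt _ hM
    split_ifs with h
    · have h1 : 1 ≤ (x % M + b) / M := (Nat.le_div_iff_mul_le hM).2 (by omega)
      have h2 : (x % M + b) / M < 2 := (Nat.div_lt_iff_lt_mul hM).2 (by omega)
      omega
    · exact Nat.div_eq_of_lt (by omega)
  rw [Finset.sum_congr rfl step4, Finset.sum_boole]
  have step5 : (Finset.range M).filter (fun b => M ≤ x % M + b) = Finset.Ico (M - x % M) M := by
    ext b
    simp only [Finset.mem_filter, Finset.mem_range, Finset.mem_Ico]
    omega
  rw [step5, Nat.card_Ico]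
  have hxm : x % M < M := Nat.mod_lt _ hM
  have h2 : M * (x / M) + x % M = x := Nat.div_add_mod x M
  generalize M * (x / M) = Q at h2 ⊢
  push_cast
  omega


lemma cnt_mono (S : Finset ℕ) (k : ℕ) {e e' : ℕ} (h : e ≤ e') : cnt S k e ≤ cnt S k e' := by
  refine Finset.card_le_card fun c hc => ?_
  simp only [Finset.mem_filter] at hc ⊢
  exact ⟨hc.1, hc.2.1, hc.2.2.trans_le h⟩

lemma cnt_dSet_cons (hM : 0 < M) (A : Finset ℕ) (hA : A ⊆ Finset.range M)
    (L : List (Finset ℕ)) (k e : ℕ) :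
    cnt (dSet M (A :: L)) k e = ∑ a ∈ A, cnt (dSet M L) (cdiv M (k - a)) (cdiv M (e - a)) := by
  have hlt : ∀ a ∈ A, a < M := fun a ha => Finset.mem_range.1 (hA ha)
  unfold cnt
  show ((A.biUnion fun a => (dSet M L).image fun s => a + M * s).filter _).card = _
  rw [Finset.filter_biUnion]
  rw [Finset.card_biUnion]
  · refine Finset.sum_congr rfl fun a ha => ?_
    rw [Finset.filter_image, Finset.card_image_of_injective _ (fun s t h => by
      simpa using Nat.eq_of_mul_eq_mul_left hM (by omega : M * s = M * t))]
    congr 1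
    apply Finset.filter_congr
    intro s _
    have h1 : k ≤ a + M * s ↔ cdiv M (k - a) ≤ s := by
      rw [cdiv_le_iff hM]
      omega
    have h2 : a + M * s < e ↔ s < cdiv M (e - a) := by
      rw [← not_le, ← not_le, cdiv_le_iff hM]
      constructor
      · intro h hc; exact h (by omega)
      · intro h hc; exact h (by omega)
    simp only [h1, h2]
  · intro a₁ h₁ a₂ h₂ hne
    apply Finset.disjoint_filter_filter
    rw [Finset.disjoint_left]
    intro c hc₁ hc₂
    simp only [Finset.mem_image] at hc₁ hc₂
    obtain ⟨s₁, _, rfl⟩ := hc₁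
    obtain ⟨s₂, _, h⟩ := hc₂
    apply hne
    have e1 : (a₁ + M * s₁) % M = a₁ := by
      rw [Nat.add_mul_mod_self_left, Nat.mod_eq_of_lt (hlt _ h₁)]
    have e2 : (a₂ + M * s₂) % M = a₂ := by
      rw [Nat.add_mul_mod_self_left, Nat.mod_eq_of_lt (hlt _ h₂)]
    rw [← e1, ← e2, h]

lemma cnt_le_canon (hM : 0 < M) :
    ∀ L : List (Finset ℕ), (∀ A ∈ L, A ⊆ Finset.range M) →
    ∀ k m : ℕ, cnt (dSet M L) k (k + m) ≤ cnt (dSet M (L.map canon)) 0 m := by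
  intro L
  induction L with
  | nil =>
    intro _ k m
    show cnt {0} k (k + m) ≤ cnt {0} 0 m
    unfold cnt
    rcases Nat.eq_zero_or_pos m with hm | hm
    · subst hm
      have h1 : ({0} : Finset ℕ).filter (fun c => k ≤ c ∧ c < k) = ∅ := by
        ext c
        simp only [Finset.mem_filter, Finset.mem_singleton, Finset.notMem_empty, iff_false]
        omega
      simp [h1]
    · have h2 : ({0} : Finset ℕ).filter (fun c => 0 ≤ c ∧ c < m) = {0} := by
        ext c; simp; omega
      rw [h2]
      exact Finset.card_filter_le _ _
  | cons A L ih =>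
    intro hgood k m
    have hA : A ⊆ Finset.range M := hgood A (by simp)
    have hL : ∀ B ∈ L, B ⊆ Finset.range M := fun B hB => hgood B (by simp [hB])
    have hlt : ∀ a ∈ A, a < M := fun a ha => Finset.mem_range.1 (hA ha)
    have hNM : A.card ≤ M := by
      calc A.card ≤ (Finset.range M).card := Finset.card_le_card hA
        _ = M := Finset.card_range M
    set N := A.card with hN
    set q := m / M with hq
    set r := m % M with hr
    set g : ℕ → ℕ := fun t => cnt (dSet M (L.map canon)) 0 t with hg
    have hgmono : ∀ {t t'}, t ≤ t' → g t ≤ g t' := fun h => cnt_mono _ _ h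
    -- LHS decomposition
    rw [cnt_dSet_cons hM A hA L k (k + m)]
    -- RHS decomposition
    show _ ≤ cnt (dSet M (canon A :: L.map canon)) 0 m
    rw [cnt_dSet_cons hM (canon A) (by
      intro a ha
      simp only [canon, Finset.mem_range] at ha ⊢
      omega) (L.map canon) 0 m]
    -- rewrite RHS
    have hRHS : ∀ a ∈ canon A, cnt (dSet M (L.map (canon))) (cdiv M (0 - a)) (cdiv M (m - a))
        = if a < r then g (q + 1) else g q := by
      intro a ha
      simp only [canon, Finset.mem_range] at ha
      have haM : a < M := lt_of_lt_of_le ha hNM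
      rw [Nat.zero_sub, cdiv_zero hM, cdiv_m_sub hM m haM, ← hr, ← hq]
      split_ifs <;> rfl
    rw [Finset.sum_congr rfl hRHS, Finset.sum_ite, Finset.sum_const, Finset.sum_const,
      smul_eq_mul, smul_eq_mul]
    have hfilt : (canon A).filter (fun a => a < r) = Finset.range (min N r) := by
      ext a
      simp [canon, lt_min_iff]
      exact fun _ => Iff.rfl
    have hfilt2 : ((canon A).filter (fun a => ¬ a < r)).card = N - min N r := by
      have := Finset.card_filter_add_card_filter_not (s := canon A) (p := fun a => a < r)
      rw [hfilt] at this
      simp only [canon, Finset.card_range] at this ⊢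
      omega
    rw [hfilt, hfilt2, Finset.card_range]
    -- LHS bound
    have hterm : ∀ a ∈ A, cnt (dSet M L) (cdiv M (k - a)) (cdiv M (k + m - a))
        ≤ if q + 1 ≤ cdiv M (k + m - a) - cdiv M (k - a) then g (q+1) else g q := by
      intro a ha
      have h1 : cdiv M (k - a) ≤ cdiv M (k + m - a) := cdiv_mono hM (by omega)
      have hle : cnt (dSet M L) (cdiv M (k - a)) (cdiv M (k + m - a))
          ≤ g (cdiv M (k + m - a) - cdiv M (k - a)) := by
        have h2 := ih hL (cdiv M (k - a)) (cdiv M (k + m - a) - cdiv M (k - a))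
        rwa [Nat.add_sub_cancel' h1] at h2
      refine hle.trans ?_
      split_ifs with h
      · apply hgmono
        have := diff_le hM k m a
        omega
      · apply hgmono; omega
    refine (Finset.sum_le_sum hterm).trans ?_
    rw [Finset.sum_ite, Finset.sum_const, Finset.sum_const, smul_eq_mul, smul_eq_mul]
    set b := (A.filter fun a => q + 1 ≤ cdiv M (k + m - a) - cdiv M (k - a)).card with hb
    have hbneg : (A.filter fun a => ¬ (q + 1 ≤ cdiv M (k + m - a) - cdiv M (k - a))).card = N - b := by
      have := Finset.card_filter_add_card_filter_not (s := A)
        (p := fun a => q + 1 ≤ cdiv M (k + m - a) - cdiv M (k - a))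
      omega
    rw [hbneg]
    have hbN : b ≤ N := by rw [hb, hN]; exact Finset.card_filter_le _ _
    -- b ≤ r via the sum identity
    have hbr : b ≤ r := by
      have hsub : (A.filter fun a => q + 1 ≤ cdiv M (k + m - a) - cdiv M (k - a))
          ⊆ (Finset.range M).filter fun a => q + 1 ≤ cdiv M (k + m - a) - cdiv M (k - a) := by
        apply Finset.filter_subset_filter
        exact hA
      have hcard : b ≤ ((Finset.range M).filter
          fun a => q + 1 ≤ cdiv M (k + m - a) - cdiv M (k - a)).card :=
        Finset.card_le_card hsub
      set b' := ((Finset.range M).filter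
          fun a => q + 1 ≤ cdiv M (k + m - a) - cdiv M (k - a)).card with hb'
      have hsum : ∑ a ∈ Finset.range M, (cdiv M (k + m - a) - cdiv M (k - a)) = m := by
        have e1 : ∀ a ∈ Finset.range M, cdiv M (k + m - a) - cdiv M (k - a)
            + cdiv M (k - a) = cdiv M (k + m - a) := by
          intro a _
          have : cdiv M (k - a) ≤ cdiv M (k + m - a) := cdiv_mono hM (by omega)
          omega
        have e2 : ∑ a ∈ Finset.range M, (cdiv M (k + m - a) - cdiv M (k - a))
            + ∑ a ∈ Finset.range M, cdiv M (k - a)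
            = ∑ a ∈ Finset.range M, cdiv M (k + m - a) := by
          rw [← Finset.sum_add_distrib]
          exact Finset.sum_congr rfl e1
        rw [sum_cdiv hM, sum_cdiv hM] at e2
        omega
      have hptwise : ∀ a ∈ Finset.range M,
          q + (if q + 1 ≤ cdiv M (k + m - a) - cdiv M (k - a) then 1 else 0)
          ≤ cdiv M (k + m - a) - cdiv M (k - a) := by
        intro a ha
        have := diff_ge hM k m (Finset.mem_range.1 ha)
        split_ifs with h <;> omega
      have hlower : M * q + b' ≤ m := by
        calc M * q + b'
            = ∑ a ∈ Finset.range M,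
              (q + (if q + 1 ≤ cdiv M (k + m - a) - cdiv M (k - a) then 1 else 0)) := by
              rw [Finset.sum_add_distrib, Finset.sum_const, Finset.card_range, smul_eq_mul,
                Finset.sum_boole]
              congr 1
          _ ≤ ∑ a ∈ Finset.range M, (cdiv M (k + m - a) - cdiv M (k - a)) :=
              Finset.sum_le_sum hptwise
          _ = m := hsum
      have hQ : M * q + r = m := Nat.div_add_mod m M
      omega
    -- final comparison
    have hgle : g q ≤ g (q + 1) := hgmono (by omega)
    have hbmin : b ≤ min N r := le_min hbN hbr
    set b' := min N r with hb'
    calc b * g (q+1) + (N - b) * g q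
        = b * g (q+1) + (b' - b) * g q + (N - b') * g q := by
          rw [add_assoc, ← Nat.add_mul]
          congr 2
          omega
      _ ≤ b * g (q+1) + (b' - b) * g (q+1) + (N - b') * g q := by
          gcongr
      _ = b' * g (q+1) + (N - b') * g q := by
          rw [← Nat.add_mul]
          congr 2
          omega


lemma sum_split (n : ℕ) (f : Fin (n + 1) → ℕ) :
    ∑ j, f j * M ^ (j : ℕ) = f 0 + M * ∑ j : Fin n, f j.succ * M ^ (j : ℕ) := by
  rw [Fin.sum_univ_succ]
  simp only [Fin.val_zero, pow_zero, mul_one, Fin.val_succ]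
  congr 1
  rw [Finset.mul_sum]
  refine Finset.sum_congr rfl fun j _ => ?_
  rw [pow_succ]
  ring

lemma mem_dSet_replicate (A : Finset ℕ) :
    ∀ (n : ℕ) (c : ℕ), c ∈ dSet M (List.replicate n A) ↔ c ∈ discreteCantor M A n := by
  intro n
  induction n with
  | zero =>
    intro c
    show c ∈ ({0} : Finset ℕ) ↔ _
    simp only [Finset.mem_singleton, discreteCantor, Set.mem_setOf_eq]
    constructor
    · rintro rfl
      exact ⟨fun j => j.elim0, fun j => j.elim0, by simp⟩
    · rintro ⟨a, _, rfl⟩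
      simp
  | succ n ih =>
    intro c
    rw [List.replicate_succ]
    show c ∈ (A.biUnion fun a => (dSet M (List.replicate n A)).image fun s => a + M * s) ↔ _
    simp only [Finset.mem_biUnion, Finset.mem_image]
    constructor
    · rintro ⟨a, ha, s, hs, rfl⟩
      obtain ⟨f, hf, rfl⟩ := (ih s).1 hs
      refine ⟨Fin.cons a f, fun j => ?_, ?_⟩
      · refine Fin.cases ?_ ?_ j
        · simpa using ha
        · intro i; simpa using hf i
      · rw [sum_split]
        simp
    · rintro ⟨f, hf, rfl⟩
      refine ⟨f 0, hf 0, ∑ j : Fin n, f j.succ * M ^ (j : ℕ), ?_, (sum_split n f).symm⟩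
      exact (ih _).2 ⟨fun j => f j.succ, fun j => hf j.succ, rfl⟩

lemma union_Icc_consec (h K : ℝ) (hh : 0 ≤ h) :
    ∀ m : ℕ, 0 < m →
      (⋃ a ∈ Finset.range m, Set.Icc ((K + a) * h) ((K + a + 1) * h))
        = Set.Icc (K * h) ((K + m) * h) := by
  intro m
  induction m with
  | zero => omega
  | succ m ih =>
    intro _
    rcases Nat.eq_zero_or_pos m with hm | hm
    · subst hm
      simp
    · rw [Finset.range_add_one]
      rw [Finset.set_biUnion_insert, ih hm, Set.union_comm,
        Set.Icc_union_Icc_eq_Icc (by nlinarith [Nat.cast_nonneg (α := ℝ) m] : K * h ≤ (K + m) * h)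
          (by nlinarith : (K + (m:ℝ)) * h ≤ (K + (m:ℝ) + 1) * h)]
      congr 2
      push_cast
      ring

lemma union_cells_cons (hM : 0 < M) (L' : List (Finset ℕ)) (h' : ℝ) (hh : 0 ≤ h') :
    (⋃ c ∈ dSet M (Finset.range M :: L'), Set.Icc ((c : ℝ) * h') (((c : ℝ) + 1) * h'))
      = ⋃ s ∈ dSet M L', Set.Icc ((s : ℝ) * (M * h')) (((s : ℝ) + 1) * (M * h')) := by
  ext x
  simp only [Set.mem_iUnion, exists_prop]
  constructor
  · rintro ⟨c, hc, hx⟩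
    show ∃ s, s ∈ dSet M L' ∧ _
    simp only [dSet, Finset.mem_biUnion, Finset.mem_image, Finset.mem_range] at hc
    obtain ⟨a, ha, s, hs, rfl⟩ := hc
    refine ⟨s, hs, ?_⟩
    rw [Set.mem_Icc] at hx ⊢
    push_cast at hx
    have ha' : (a : ℝ) + 1 ≤ M := by exact_mod_cast ha
    have ha0 : (0:ℝ) ≤ (a:ℝ) := Nat.cast_nonneg a
    constructor
    · nlinarith [hx.1]
    · nlinarith [hx.2]
  · rintro ⟨s, hs, hx⟩
    have hx' : x ∈ ⋃ a ∈ Finset.range M, Set.Icc (((M * s : ℝ) + a) * h') (((M * s : ℝ) + a + 1) * h') := by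
      rw [union_Icc_consec h' (M * s : ℝ) hh M hM]
      rw [Set.mem_Icc] at hx ⊢
      constructor
      · nlinarith [hx.1]
      · nlinarith [hx.2]
    simp only [Set.mem_iUnion, exists_prop, Finset.mem_range] at hx'
    obtain ⟨a, ha, hxa⟩ := hx'
    refine ⟨a + M * s, ?_, ?_⟩
    · simp only [dSet, Finset.mem_biUnion, Finset.mem_image, Finset.mem_range]
      exact ⟨a, ha, s, hs, rfl⟩
    · rw [Set.mem_Icc] at hxa ⊢
      push_cast
      constructor
      · nlinarith [hxa.1]
      · nlinarith [hxa.2]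

lemma cantor_eq_union (hM : 0 < M) (A : Finset ℕ) (n : ℕ) :
    ∀ j : ℕ, cantorIter 1 M A n
      = ⋃ c ∈ dSet M (List.replicate j (Finset.range M) ++ List.replicate n A),
          Set.Icc ((c : ℝ) * (((M : ℝ) ^ (j + n))⁻¹)) (((c : ℝ) + 1) * (((M : ℝ) ^ (j + n))⁻¹)) := by
  have hM0 : (M : ℝ) ≠ 0 := by positivity
  intro j
  induction j with
  | zero =>
    show cantorIter 1 M A n = ⋃ c ∈ dSet M (List.replicate n A), _
    unfold cantorIter
    ext x
    simp only [Set.mem_iUnion, exists_prop]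
    have hb : ∀ c : ℕ, (1 : ℝ) / (M:ℝ)^n * (c:ℝ) = (c:ℝ) * (((M:ℝ)^(0+n))⁻¹) := by
      intro c; rw [zero_add]; ring
    have hb' : ∀ c : ℕ, (1 : ℝ) / (M:ℝ)^n * ((c:ℝ)+1) = ((c:ℝ)+1) * (((M:ℝ)^(0+n))⁻¹) := by
      intro c; rw [zero_add]; ring
    constructor
    · rintro ⟨c, hc, hx⟩
      exact ⟨c, (mem_dSet_replicate A n c).2 hc, by rwa [← hb, ← hb']⟩
    · rintro ⟨c, hc, hx⟩
      exact ⟨c, (mem_dSet_replicate A n c).1 hc, by rwa [hb, hb']⟩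
  | succ j ih =>
    rw [List.replicate_succ, List.cons_append]
    rw [union_cells_cons hM _ _ (by positivity)]
    rw [ih]
    have key : (M : ℝ) * ((M:ℝ)^(j+1+n))⁻¹ = ((M:ℝ)^(j+n))⁻¹ := by
      rw [show j+1+n = (j+n)+1 by omega, pow_succ]
      field_simp
    rw [key]


lemma vol_inter (S : Finset ℕ) {h : ℝ} (hh : 0 < h) (x y : ℝ) :
    volume ((⋃ c ∈ S, Set.Icc ((c : ℝ) * h) (((c : ℝ) + 1) * h)) ∩ Set.Icc x y)
      = ∑ c ∈ S, ENNReal.ofReal (min (((c : ℝ) + 1) * h) y - max ((c : ℝ) * h) x) := by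
  have hmid : volume ((⋃ c ∈ S, Set.Ico ((c : ℝ) * h) (((c : ℝ) + 1) * h)) ∩ Set.Ico x y)
      = ∑ c ∈ S, ENNReal.ofReal (min (((c : ℝ) + 1) * h) y - max ((c : ℝ) * h) x) := by
    rw [Set.iUnion₂_inter]
    rw [measure_biUnion_finset]
    · refine Finset.sum_congr rfl fun c _ => ?_
      rw [Set.Ico_inter_Ico, Real.volume_Ico]
    · intro c hc c' hc' hne
      have key : ∀ {u v : ℕ}, u < v →
          Disjoint (Set.Ico ((u:ℝ)*h) (((u:ℝ)+1)*h) ∩ Set.Ico x y)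
            (Set.Ico ((v:ℝ)*h) (((v:ℝ)+1)*h) ∩ Set.Ico x y) := by
        intro u v huv
        refine Set.disjoint_left.2 fun z hz hz' => ?_
        have h1 : z < ((u:ℝ)+1)*h := hz.1.2
        have h2 : ((v:ℝ))*h ≤ z := hz'.1.1
        have h3 : ((u:ℝ)+1) ≤ (v:ℝ) := by exact_mod_cast huv
        nlinarith
      rcases lt_or_gt_of_ne hne with h' | h'
      · exact key h'
      · exact (key h').symm
    · intro c _
      exact (measurableSet_Ico).inter measurableSet_Ico
  have hjunk : volume ((⋃ c ∈ S, ({((c:ℝ)+1)*h} : Set ℝ)) ∪ {y}) = 0 := by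
    apply measure_union_null
    · apply Set.Finite.measure_zero
      exact Set.Finite.biUnion S.finite_toSet (fun c _ => Set.finite_singleton _)
    · exact measure_singleton y
  apply le_antisymm
  · calc volume ((⋃ c ∈ S, Set.Icc ((c : ℝ) * h) (((c : ℝ) + 1) * h)) ∩ Set.Icc x y)
        ≤ volume (((⋃ c ∈ S, Set.Ico ((c : ℝ) * h) (((c : ℝ) + 1) * h)) ∩ Set.Ico x y)
            ∪ ((⋃ c ∈ S, ({((c:ℝ)+1)*h} : Set ℝ)) ∪ {y})) := by
          apply measure_mono
          rintro z ⟨hz1, hz2⟩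
          simp only [Set.mem_iUnion, exists_prop] at hz1
          obtain ⟨c, hc, hzc⟩ := hz1
          rcases eq_or_lt_of_le hzc.2 with heq | hlt
          · exact Or.inr (Or.inl (Set.mem_biUnion hc (by simp [heq])))
          · rcases eq_or_lt_of_le hz2.2 with heq' | hlt'
            · exact Or.inr (Or.inr (by simp [heq']))
            · exact Or.inl ⟨Set.mem_biUnion hc ⟨hzc.1, hlt⟩, hz2.1, hlt'⟩
      _ ≤ volume ((⋃ c ∈ S, Set.Ico ((c : ℝ) * h) (((c : ℝ) + 1) * h)) ∩ Set.Ico x y)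
            + volume ((⋃ c ∈ S, ({((c:ℝ)+1)*h} : Set ℝ)) ∪ {y}) := measure_union_le _ _
      _ = ∑ c ∈ S, ENNReal.ofReal (min (((c : ℝ) + 1) * h) y - max ((c : ℝ) * h) x) := by
          rw [hjunk, add_zero, hmid]
  · rw [← hmid]
    apply measure_mono
    apply Set.inter_subset_inter
    · exact Set.iUnion₂_mono fun c _ => Set.Ico_subset_Icc_self
    · exact Set.Ico_subset_Icc_self


lemma vol_window_le (hM : 1 < M) (A : Finset ℕ) (hA : A ⊆ Finset.range M) (n : ℕ)
    {x y : ℝ} (hxy : x ≤ y) :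
    volume (cantorIter 1 M A n ∩ Set.Icc x y)
      ≤ volume (cantorIter 1 M (Finset.range A.card) n ∩ Set.Icc 0 (y - x)) := by
  have hM0 : 0 < M := by omega
  apply ENNReal.le_of_forall_pos_le_add
  intro ε hε _
  have hε' : (0:ℝ) < (ε:ℝ) := hε
  -- choose the refinement level j
  obtain ⟨j, hj0⟩ : ∃ j : ℕ, ((1:ℝ)/2) ^ j < (ε:ℝ)/2 :=
    exists_pow_lt_of_lt_one (by positivity) (by norm_num)
  have hMj : (2:ℝ)^j ≤ (M:ℝ)^(j+n) := by
    calc (2:ℝ)^j ≤ (2:ℝ)^(j+n) := by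
          apply pow_le_pow_right₀ (by norm_num) (by omega)
      _ ≤ (M:ℝ)^(j+n) := by
          apply pow_le_pow_left₀ (by norm_num)
          exact_mod_cast hM
  have hj : 2 * (((M:ℝ)^(j+n))⁻¹) < (ε:ℝ) := by
    have h2 : (0:ℝ) < (2:ℝ)^j := by positivity
    have h3 : ((M:ℝ)^(j+n))⁻¹ ≤ ((2:ℝ)^j)⁻¹ := by
      apply inv_anti₀ h2 hMj
    have h4 : ((2:ℝ)^j)⁻¹ = ((1:ℝ)/2)^j := by
      rw [one_div, inv_pow]
    nlinarith
  set P : ℝ := (M:ℝ)^(j+n) with hPdef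
  have hP : 0 < P := by positivity
  set hstep : ℝ := P⁻¹ with hhdef
  have hh : 0 < hstep := by positivity
  have hPh : P * hstep = 1 := mul_inv_cancel₀ (ne_of_gt hP)
  set LS := List.replicate j (Finset.range M) ++ List.replicate n A with hLS
  have hgood : ∀ B ∈ LS, B ⊆ Finset.range M := by
    intro B hB
    rw [hLS, List.mem_append] at hB
    rcases hB with hB | hB
    · rw [List.eq_of_mem_replicate hB]
    · rw [List.eq_of_mem_replicate hB]; exact hA
  have hTlist : LS.map canon
      = List.replicate j (Finset.range M) ++ List.replicate n (Finset.range A.card) := by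
    rw [hLS, List.map_append, List.map_replicate, List.map_replicate]
    congr 2
    unfold canon
    rw [Finset.card_range]
  set S := dSet M LS with hS
  set T := dSet M (List.replicate j (Finset.range M) ++ List.replicate n (Finset.range A.card))
    with hT
  set k : ℕ := (⌊P * x⌋).toNat with hk
  set e : ℕ := max k ((⌈P * y⌉).toNat) with he
  set m : ℕ := e - k with hm
  have hke : k ≤ e := le_max_left _ _
  -- facts about k and e
  have hF1 : ∀ c : ℕ, c < k → ((c:ℝ)+1) * hstep ≤ x := by
    intro c hc
    have hkpos : (0:ℤ) < ⌊P * x⌋ := by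
      by_contra hcon
      push_neg at hcon
      have : (⌊P * x⌋).toNat = 0 := Int.toNat_of_nonpos hcon
      omega
    have hkval : ((k:ℕ):ℤ) = ⌊P * x⌋ := Int.toNat_of_nonneg (le_of_lt hkpos)
    have h1 : ((c:ℝ) + 1) ≤ (k:ℝ) := by exact_mod_cast hc
    have h2 : ((k:ℝ)) ≤ P * x := by
      have := Int.floor_le (P * x)
      have hcast : ((k:ℕ):ℝ) = ((⌊P * x⌋ : ℤ):ℝ) := by exact_mod_cast hkval
      linarith [hcast ▸ this]
    calc ((c:ℝ)+1) * hstep ≤ (P * x) * hstep := by nlinarith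
      _ = x * (P * hstep) := by ring
      _ = x := by rw [hPh]; ring
  have hF2 : ∀ c : ℕ, e ≤ c → y ≤ (c:ℝ) * hstep := by
    intro c hc
    have h0 : ((⌈P * y⌉).toNat : ℕ) ≤ c := le_trans (le_max_right _ _) hc
    have h1 : P * y ≤ (c:ℝ) := by
      have i1 : P * y ≤ ((⌈P * y⌉:ℤ):ℝ) := Int.le_ceil _
      have i2 : ((⌈P * y⌉:ℤ):ℝ) ≤ (((⌈P * y⌉).toNat : ℕ):ℝ) := by
        exact_mod_cast Int.self_le_toNat _
      have i3 : (((⌈P * y⌉).toNat : ℕ):ℝ) ≤ (c:ℝ) := by exact_mod_cast h0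
      linarith
    calc y = (P * y) * hstep := by rw [mul_comm P y, mul_assoc, hPh]; ring
      _ ≤ (c:ℝ) * hstep := by nlinarith
  have hF3 : (m:ℝ) * hstep ≤ (y - x) + 2 * hstep := by
    have hyx : 0 ≤ y - x := by linarith
    by_cases hek : ((⌈P * y⌉).toNat) ≤ k
    · have : e = k := max_eq_left hek
      have : m = 0 := by omega
      rw [this]
      simp
      nlinarith
    · push_neg at hek
      have hee : e = (⌈P * y⌉).toNat := max_eq_right (le_of_lt hek)
      have hepos : 0 < e := by omega
      have hceil : (0:ℤ) < ⌈P * y⌉ := by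
        by_contra hcon
        push_neg at hcon
        have : (⌈P * y⌉).toNat = 0 := Int.toNat_of_nonpos hcon
        omega
      have heval : ((e:ℕ):ℤ) = ⌈P * y⌉ := by
        rw [hee]; exact Int.toNat_of_nonneg (le_of_lt hceil)
      have hele : (e:ℝ) ≤ P * y + 1 := by
        have := Int.ceil_lt_add_one (P * y)
        have hcast : ((e:ℕ):ℝ) = ((⌈P * y⌉ : ℤ):ℝ) := by exact_mod_cast heval
        linarith [hcast ▸ this]
      have hkge : P * x - 1 ≤ (k:ℝ) := by
        rcases le_or_gt 0 (⌊P * x⌋) with hfl | hfl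
        · have hkval : ((k:ℕ):ℤ) = ⌊P * x⌋ := Int.toNat_of_nonneg hfl
          have := Int.sub_one_lt_floor (P * x)
          have hcast : ((k:ℕ):ℝ) = ((⌊P * x⌋ : ℤ):ℝ) := by exact_mod_cast hkval
          linarith [hcast ▸ this]
        · have : k = 0 := by
            rw [hk]
            exact Int.toNat_of_nonpos (by omega)
          rw [this]
          have h1 : P * x < (⌊P * x⌋ : ℝ) + 1 := Int.lt_floor_add_one _
          have h2 : ((⌊P * x⌋:ℤ):ℝ) ≤ 0 := by exact_mod_cast (by omega : ⌊P*x⌋ ≤ 0)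
          simp
          linarith
      have hmcast : (m:ℝ) = (e:ℝ) - (k:ℝ) := by
        rw [hm]
        push_cast [Nat.cast_sub hke]
        ring
      have hbound : (m:ℝ) ≤ P * (y - x) + 2 := by
        rw [hmcast]
        nlinarith
      calc (m:ℝ) * hstep ≤ (P * (y-x) + 2) * hstep := by nlinarith
        _ = (y - x) * (P * hstep) + 2 * hstep := by ring
        _ = (y - x) + 2 * hstep := by rw [hPh]; ring
  -- the chain
  have step1 : volume (cantorIter 1 M A n ∩ Set.Icc x y)
      = ∑ c ∈ S, ENNReal.ofReal (min (((c : ℝ) + 1) * hstep) y - max ((c : ℝ) * hstep) x) := by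
    rw [cantor_eq_union hM0 A n j, vol_inter _ hh x y]
  have step2 : ∑ c ∈ S, ENNReal.ofReal (min (((c : ℝ) + 1) * hstep) y - max ((c : ℝ) * hstep) x)
      ≤ (cnt S k e) * ENNReal.ofReal hstep := by
    rw [← Finset.sum_filter_add_sum_filter_not S (fun c => k ≤ c ∧ c < e)]
    have hzero : ∑ c ∈ S.filter (fun c => ¬(k ≤ c ∧ c < e)),
        ENNReal.ofReal (min (((c : ℝ) + 1) * hstep) y - max ((c : ℝ) * hstep) x) = 0 := by
      apply Finset.sum_eq_zero
      intro c hc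
      rw [Finset.mem_filter] at hc
      rw [ENNReal.ofReal_eq_zero]
      rcases not_and_or.1 hc.2 with hcc | hcc
      · push_neg at hcc
        have := hF1 c hcc
        have : min (((c : ℝ) + 1) * hstep) y ≤ max ((c : ℝ) * hstep) x :=
          le_trans (min_le_left _ _) (le_trans this (le_max_right _ _))
        linarith
      · push_neg at hcc
        have := hF2 c hcc
        have : min (((c : ℝ) + 1) * hstep) y ≤ max ((c : ℝ) * hstep) x :=
          le_trans (min_le_right _ _) (le_trans this (le_max_left _ _))
        linarith
    rw [hzero, add_zero]
    have hle : ∀ c ∈ S.filter (fun c => k ≤ c ∧ c < e),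
        ENNReal.ofReal (min (((c : ℝ) + 1) * hstep) y - max ((c : ℝ) * hstep) x)
          ≤ ENNReal.ofReal hstep := by
      intro c _
      apply ENNReal.ofReal_le_ofReal
      have h1 : min (((c : ℝ) + 1) * hstep) y ≤ ((c : ℝ) + 1) * hstep := min_le_left _ _
      have h2 : (c:ℝ) * hstep ≤ max ((c : ℝ) * hstep) x := le_max_left _ _
      nlinarith
    calc ∑ c ∈ S.filter (fun c => k ≤ c ∧ c < e),
          ENNReal.ofReal (min (((c : ℝ) + 1) * hstep) y - max ((c : ℝ) * hstep) x)
        ≤ ∑ _c ∈ S.filter (fun c => k ≤ c ∧ c < e), ENNReal.ofReal hstep :=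
          Finset.sum_le_sum hle
      _ = (cnt S k e) * ENNReal.ofReal hstep := by
          rw [Finset.sum_const, cnt]
          simp [nsmul_eq_mul]
  have step3 : (cnt S k e : ℝ≥0∞) * ENNReal.ofReal hstep
      ≤ (cnt T 0 m : ℝ≥0∞) * ENNReal.ofReal hstep := by
    apply mul_le_mul_left
    have hcnt : cnt S k e ≤ cnt T 0 m := by
      have := cnt_le_canon hM0 LS hgood k m
      rw [hTlist] at this
      rw [← hT] at this
      have heq : k + m = e := by omega
      rw [heq] at this
      exact this
    exact_mod_cast hcnt
  have step4 : (cnt T 0 m : ℝ≥0∞) * ENNReal.ofReal hstep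
      ≤ ∑ c ∈ T, ENNReal.ofReal (min (((c : ℝ) + 1) * hstep) ((m:ℝ) * hstep)
          - max ((c : ℝ) * hstep) 0) := by
    have heq : ∀ c ∈ T.filter (fun c => 0 ≤ c ∧ c < m),
        ENNReal.ofReal hstep
          = ENNReal.ofReal (min (((c : ℝ) + 1) * hstep) ((m:ℝ) * hstep) - max ((c : ℝ) * hstep) 0) := by
      intro c hc
      rw [Finset.mem_filter] at hc
      have hcm : (c:ℝ) + 1 ≤ (m:ℝ) := by exact_mod_cast hc.2.2
      have hmin : min (((c : ℝ) + 1) * hstep) ((m:ℝ) * hstep) = ((c : ℝ) + 1) * hstep := by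
        apply min_eq_left
        nlinarith
      have hmax : max ((c : ℝ) * hstep) 0 = (c:ℝ) * hstep := by
        apply max_eq_left
        positivity
      rw [hmin, hmax]
      congr 1
      ring
    calc (cnt T 0 m : ℝ≥0∞) * ENNReal.ofReal hstep
        = ∑ c ∈ T.filter (fun c => 0 ≤ c ∧ c < m), ENNReal.ofReal hstep := by
          rw [Finset.sum_const, cnt]
          simp [nsmul_eq_mul]
      _ = ∑ c ∈ T.filter (fun c => 0 ≤ c ∧ c < m),
            ENNReal.ofReal (min (((c : ℝ) + 1) * hstep) ((m:ℝ) * hstep) - max ((c : ℝ) * hstep) 0) :=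
          Finset.sum_congr rfl heq
      _ ≤ ∑ c ∈ T, ENNReal.ofReal (min (((c : ℝ) + 1) * hstep) ((m:ℝ) * hstep)
            - max ((c : ℝ) * hstep) 0) := by
          apply Finset.sum_le_sum_of_subset (Finset.filter_subset _ _)
  have step5 : ∑ c ∈ T, ENNReal.ofReal (min (((c : ℝ) + 1) * hstep) ((m:ℝ) * hstep)
        - max ((c : ℝ) * hstep) 0)
      = volume (cantorIter 1 M (Finset.range A.card) n ∩ Set.Icc 0 ((m:ℝ) * hstep)) := by
    rw [cantor_eq_union hM0 (Finset.range A.card) n j, vol_inter _ hh 0 ((m:ℝ)*hstep)]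
  have step6 : volume (cantorIter 1 M (Finset.range A.card) n ∩ Set.Icc 0 ((m:ℝ) * hstep))
      ≤ volume (cantorIter 1 M (Finset.range A.card) n ∩ Set.Icc 0 (y - x))
        + ENNReal.ofReal (2 * hstep) := by
    calc volume (cantorIter 1 M (Finset.range A.card) n ∩ Set.Icc 0 ((m:ℝ) * hstep))
        ≤ volume ((cantorIter 1 M (Finset.range A.card) n ∩ Set.Icc 0 (y - x))
            ∪ Set.Icc (y-x) ((y-x) + 2*hstep)) := by
          apply measure_mono
          rintro z ⟨hz1, hz2⟩
          rcases le_or_gt z (y - x) with hcase | hcase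
          · exact Or.inl ⟨hz1, hz2.1, hcase⟩
          · refine Or.inr ⟨le_of_lt hcase, ?_⟩
            calc z ≤ (m:ℝ) * hstep := hz2.2
              _ ≤ (y - x) + 2 * hstep := hF3
      _ ≤ volume (cantorIter 1 M (Finset.range A.card) n ∩ Set.Icc 0 (y - x))
            + volume (Set.Icc (y-x) ((y-x) + 2*hstep)) := measure_union_le _ _
      _ ≤ volume (cantorIter 1 M (Finset.range A.card) n ∩ Set.Icc 0 (y - x))
            + ENNReal.ofReal (2 * hstep) := by
          apply add_le_add_right
          rw [Real.volume_Icc]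
          apply ENNReal.ofReal_le_ofReal
          linarith
  have hfinal : ENNReal.ofReal (2 * hstep) ≤ (ε : ℝ≥0∞) := by
    rw [← ENNReal.ofReal_coe_nnreal]
    exact ENNReal.ofReal_le_ofReal (le_of_lt hj)
  calc volume (cantorIter 1 M A n ∩ Set.Icc x y)
      ≤ (cnt S k e) * ENNReal.ofReal hstep := by rw [step1]; exact step2
    _ ≤ (cnt T 0 m) * ENNReal.ofReal hstep := step3
    _ ≤ volume (cantorIter 1 M (Finset.range A.card) n ∩ Set.Icc 0 ((m:ℝ) * hstep)) := by
        rw [← step5]; exact step4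
    _ ≤ volume (cantorIter 1 M (Finset.range A.card) n ∩ Set.Icc 0 (y - x))
        + ENNReal.ofReal (2 * hstep) := step6
    _ ≤ volume (cantorIter 1 M (Finset.range A.card) n ∩ Set.Icc 0 (y - x)) + ε :=
        add_le_add_right hfinal _


end CantorAux

open CantorAux in
theorem cantorFun_weak_subadditive (M : ℕ) (hM : 1 < M) (A : Finset ℕ) (hA : A.Nonempty)
    (hAsub : A ⊆ Finset.range M) (hAprop : A ≠ Finset.range M) (n : ℕ) :
    ∀ x y : ℝ, x ≤ y →
      cantorFun M A n y - cantorFun M A n x ≤ cantorFun M (Finset.range A.card) n (y - x) := by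
  intro x y hxy
  have hN : 0 < A.card := Finset.card_pos.2 hA
  have hd : (0:ℝ) < ((A.card : ℝ) / (M : ℝ)) ^ n := by positivity
  set d : ℝ := ((A.card : ℝ) / (M : ℝ)) ^ n with hddef
  set vy := volume (cantorIter 1 M A n ∩ Set.Icc 0 y) with hvy
  set vx := volume (cantorIter 1 M A n ∩ Set.Icc 0 x) with hvx
  set w := volume (cantorIter 1 M (Finset.range A.card) n ∩ Set.Icc 0 (y - x)) with hw
  have hsub : vy ≤ vx + w := by
    calc vy ≤ volume ((cantorIter 1 M A n ∩ Set.Icc 0 x) ∪ (cantorIter 1 M A n ∩ Set.Icc x y)) := by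
          apply measure_mono
          rintro z ⟨hz1, hz2⟩
          rcases le_or_gt z x with hc | hc
          · exact Or.inl ⟨hz1, hz2.1, hc⟩
          · exact Or.inr ⟨hz1, le_of_lt hc, hz2.2⟩
      _ ≤ vx + volume (cantorIter 1 M A n ∩ Set.Icc x y) := measure_union_le _ _
      _ ≤ vx + w := add_le_add_right (vol_window_le hM A hAsub n hxy) _
  have hxfin : vx ≠ ⊤ := by
    have : vx ≤ volume (Set.Icc (0:ℝ) x) := measure_mono Set.inter_subset_right
    rw [Real.volume_Icc] at this
    exact ne_top_of_le_ne_top ENNReal.ofReal_ne_top this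
  have hwfin : w ≠ ⊤ := by
    have : w ≤ volume (Set.Icc (0:ℝ) (y-x)) := measure_mono Set.inter_subset_right
    rw [Real.volume_Icc] at this
    exact ne_top_of_le_ne_top ENNReal.ofReal_ne_top this
  have htr : vy.toReal ≤ vx.toReal + w.toReal := by
    have h1 : vy.toReal ≤ (vx + w).toReal :=
      ENNReal.toReal_mono (by simp [ENNReal.add_ne_top, hxfin, hwfin]) hsub
    rwa [ENNReal.toReal_add hxfin hwfin] at h1
  show vy.toReal / d - vx.toReal / d ≤ w.toReal / ((Finset.range A.card).card / (M:ℝ)) ^ n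
  rw [Finset.card_range, ← hddef, div_sub_div_same]
  exact (div_le_div_iff_of_pos_right hd).2 (by linarith)
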